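/- For any dual weak brace (S, +, ∘), the right distributor D_r(S) is a full inverse subsemigroup of the Clifford semigroup (S, ∘): it contains all idempotents E(S), is closed under ∘, and is closed under taking ∘-inverses. Moreover, D_r(S) contains the center of (S,∘). -/

import Mathlib

section Gen
variable {S : Type*} (op : S → S → S) (iv : S → S)
  (assoc : ∀ a b c : S, op (op a b) c = op a (op b c))
  (reg : ∀ a : S, op (op a (iv a)) a = a)
  (reg' : ∀ a : S, op (op (iv a) a) (iv a) = iv a)
  (uniq : ∀ a b : S, op (op a b) a = a → op (op b a) b = b → b = iv a)

include assoc reg reg' uniq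

omit assoc reg reg' in
theorem gen_idem_iv {a : S} (h : op a a = a) : iv a = a :=
  (uniq a a (by rw [h, h]) (by rw [h, h])).symm

omit assoc in
theorem gen_iv_iv (a : S) : iv (iv a) = a := (uniq (iv a) a (reg' a) (reg a)).symm

omit reg' uniq in
theorem gen_idem_opiv (a : S) : op (op a (iv a)) (op a (iv a)) = op a (iv a) := by
  rw [← assoc, reg]

omit reg uniq in
theorem gen_idem_ivop (a : S) : op (op (iv a) a) (op (iv a) a) = op (iv a) a := by
  rw [← assoc, reg']

theorem gen_idem_op {e f : S} (he : op e e = e) (hf : op f f = f) :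
    op (op e f) (op e f) = op e f := by
  have hsqe : ∀ t, op e (op e t) = op e t := fun t => by rw [← assoc, he]
  have hsqf : ∀ t, op f (op f t) = op f t := fun t => by rw [← assoc, hf]
  have h_a : op (op (op e f) (iv (op e f))) (op e f) = op e f := reg (op e f)
  have h_b : op (op (iv (op e f)) (op e f)) (iv (op e f)) = iv (op e f) := reg' (op e f)
  set x := iv (op e f) with hx
  have h_b' : ∀ t, op x (op e (op f (op x t))) = op x t := by
    intro t
    have h := congrArg (fun s => op s t) h_b
    simp only [assoc] at h
    exact h
  have hna : op e (op f (op x (op e f))) = op e f := by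
    have h := h_a; simp only [assoc] at h; exact h
  have need1 : op (op (op e f) (op f (op x e))) (op e f) = op e f := by
    simp only [assoc]
    rw [hsqf, hsqe]
    exact hna
  have need2 : op (op (op f (op x e)) (op e f)) (op f (op x e)) = op f (op x e) := by
    simp only [assoc]
    rw [hsqe, hsqf, h_b']
  have hxy : op f (op x e) = x := uniq (op e f) (op f (op x e)) need1 need2
  have idemx : op x x = x := by
    conv_lhs => rw [← hxy]
    simp only [assoc]
    rw [h_b', hxy]
  have hef : op e f = x := by
    have h := uniq x (op e f) h_b h_a
    rwa [gen_idem_iv op iv uniq idemx] at h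
  rw [hef, idemx]

theorem gen_idem_comm {e f : S} (he : op e e = e) (hf : op f f = f) :
    op e f = op f e := by
  have hsqe : ∀ t, op e (op e t) = op e t := fun t => by rw [← assoc, he]
  have hsqf : ∀ t, op f (op f t) = op f t := fun t => by rw [← assoc, hf]
  have ief : op (op e f) (op e f) = op e f := gen_idem_op op iv assoc reg reg' uniq he hf
  have ife : op (op f e) (op f e) = op f e := gen_idem_op op iv assoc reg reg' uniq hf he
  have need1 : op (op (op e f) (op f e)) (op e f) = op e f := by
    have h := ief
    simp only [assoc] at h ⊢
    rw [hsqf, hsqe]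
    exact h
  have need2 : op (op (op f e) (op e f)) (op f e) = op f e := by
    have h := ife
    simp only [assoc] at h ⊢
    rw [hsqe, hsqf]
    exact h
  have h := uniq (op e f) (op f e) need1 need2
  rw [gen_idem_iv op iv uniq ief] at h
  exact h.symm

theorem gen_iv_op (a b : S) : iv (op a b) = op (iv b) (iv a) := by
  have comm1 : op (op b (iv b)) (op (iv a) a) = op (op (iv a) a) (op b (iv b)) :=
    gen_idem_comm op iv assoc reg reg' uniq (gen_idem_opiv op iv assoc reg b)
      (gen_idem_ivop op iv assoc reg' a)
  have need1 : op (op (op a b) (op (iv b) (iv a))) (op a b) = op a b := by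
    calc op (op (op a b) (op (iv b) (iv a))) (op a b)
        = op a (op (op (op b (iv b)) (op (iv a) a)) b) := by simp only [assoc]
      _ = op a (op (op (op (iv a) a) (op b (iv b))) b) := by rw [comm1]
      _ = op (op (op a (iv a)) a) (op (op b (iv b)) b) := by simp only [assoc]
      _ = op a b := by rw [reg, reg]
  have need2 : op (op (op (iv b) (iv a)) (op a b)) (op (iv b) (iv a))
      = op (iv b) (iv a) := by
    calc op (op (op (iv b) (iv a)) (op a b)) (op (iv b) (iv a))
        = op (iv b) (op (op (op (iv a) a) (op b (iv b))) (iv a)) := by simp only [assoc]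
      _ = op (iv b) (op (op (op b (iv b)) (op (iv a) a)) (iv a)) := by rw [← comm1]
      _ = op (op (op (iv b) b) (iv b)) (op (op (iv a) a) (iv a)) := by simp only [assoc]
      _ = op (iv b) (iv a) := by rw [reg', reg']
  exact (uniq (op a b) (op (iv b) (iv a)) need1 need2).symm

omit assoc in
theorem gen_hom_iv (f : S → S) (hf : ∀ x y, f (op x y) = op (f x) (f y)) (a : S) :
    f (iv a) = iv (f a) := by
  apply uniq
  · rw [← hf, ← hf, reg]
  · rw [← hf, ← hf, reg']

end Gen



/-- A dual weak (left) brace: `(S,+)` and `(S,∘)` are inverse semigroups, `(S,∘)` is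
Clifford, with `a ∘ (b + c) = a ∘ b - a + a ∘ c` and `a ∘ a⁻ = -a + a`. -/
structure DualWeakBrace (S : Type*) where
  add : S → S → S
  mul : S → S → S
  neg : S → S
  inv : S → S
  add_assoc : ∀ a b c, add (add a b) c = add a (add b c)
  mul_assoc : ∀ a b c, mul (mul a b) c = mul a (mul b c)
  add_reg : ∀ a, add (add a (neg a)) a = a
  neg_reg : ∀ a, add (add (neg a) a) (neg a) = neg a
  neg_unique : ∀ a b, add (add a b) a = a → add (add b a) b = b → b = neg a
  mul_reg : ∀ a, mul (mul a (inv a)) a = a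
  inv_reg : ∀ a, mul (mul (inv a) a) (inv a) = inv a
  inv_unique : ∀ a b, mul (mul a b) a = a → mul (mul b a) b = b → b = inv a
  clifford : ∀ a, mul a (inv a) = mul (inv a) a
  dist : ∀ a b c, mul a (add b c) = add (add (mul a b) (neg a)) (mul a c)
  weak : ∀ a, mul a (inv a) = add (neg a) a

/-- The right distributor `D_r(S)`. -/
def DualWeakBrace.Dr {S : Type*} (B : DualWeakBrace S) : Set S :=
  {z | ∀ a b, B.mul (B.add a b) z = B.add (B.add (B.mul a z) (B.neg z)) (B.mul b z)}

/-- `σ_a^z(b) = -a∘z + a∘b∘z`. -/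
def DualWeakBrace.sigma {S : Type*} (B : DualWeakBrace S) (z a b : S) : S :=
  B.add (B.neg (B.mul a z)) (B.mul (B.mul a b) z)

/-- `τ_b^z(a) = (σ_a^z(b))⁻ ∘ a ∘ b`. -/
def DualWeakBrace.tau {S : Type*} (B : DualWeakBrace S) (z b a : S) : S :=
  B.mul (B.mul (B.inv (B.sigma z a b)) a) b

/-- The deformed map `r_z`. -/
def DualWeakBrace.rz {S : Type*} (B : DualWeakBrace S) (z : S) : S × S → S × S :=
  fun p => (B.sigma z p.1 p.2, B.tau z p.2 p.1)

/-- The map `ř_w(a,b) = (a∘b - a∘w + w, (a∘b - a∘w + w)⁻ ∘ a ∘ b)`. -/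
def DualWeakBrace.rcheck {S : Type*} (B : DualWeakBrace S) (w : S) : S × S → S × S :=
  fun p =>
    (B.add (B.add (B.mul p.1 p.2) (B.neg (B.mul p.1 w))) w,
     B.mul (B.mul (B.inv (B.add (B.add (B.mul p.1 p.2) (B.neg (B.mul p.1 w))) w)) p.1) p.2)


namespace DualWeakBrace
variable {S : Type*} (B : DualWeakBrace S)

theorem neg_neg (a : S) : B.neg (B.neg a) = a :=
  gen_iv_iv B.add B.neg B.add_reg B.neg_reg B.neg_unique a

theorem inv_inv (a : S) : B.inv (B.inv a) = a :=
  gen_iv_iv B.mul B.inv B.mul_reg B.inv_reg B.inv_unique a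

theorem add_idem_neg {a : S} (h : B.add a a = a) : B.neg a = a :=
  gen_idem_iv B.add B.neg B.neg_unique h

theorem mul_idem_inv {a : S} (h : B.mul a a = a) : B.inv a = a :=
  gen_idem_iv B.mul B.inv B.inv_unique h

theorem neg_add (a b : S) : B.neg (B.add a b) = B.add (B.neg b) (B.neg a) :=
  gen_iv_op B.add B.neg B.add_assoc B.add_reg B.neg_reg B.neg_unique a b

theorem inv_mul (a b : S) : B.inv (B.mul a b) = B.mul (B.inv b) (B.inv a) :=
  gen_iv_op B.mul B.inv B.mul_assoc B.mul_reg B.inv_reg B.inv_unique a b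

theorem add_idem_comm {e f : S} (he : B.add e e = e) (hf : B.add f f = f) :
    B.add e f = B.add f e :=
  gen_idem_comm B.add B.neg B.add_assoc B.add_reg B.neg_reg B.neg_unique he hf

theorem mul_idem_comm {e f : S} (he : B.mul e e = e) (hf : B.mul f f = f) :
    B.mul e f = B.mul f e :=
  gen_idem_comm B.mul B.inv B.mul_assoc B.mul_reg B.inv_reg B.inv_unique he hf

theorem add_hom_neg (f : S → S) (hf : ∀ x y, f (B.add x y) = B.add (f x) (f y))
    (a : S) : f (B.neg a) = B.neg (f a) :=
  gen_hom_iv B.add B.neg B.add_reg B.neg_reg B.neg_unique f hf a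

end DualWeakBrace

namespace DualWeakBrace
variable {S : Type*} (B : DualWeakBrace S)

/-- ★': `(a∘e)∘a⁻ = e∘(a⁻∘a)` for `e` a `∘`-idempotent. -/
theorem star {e : S} (he : B.mul e e = e) (a : S) :
    B.mul (B.mul a e) (B.inv a) = B.mul e (B.mul (B.inv a) a) := by
  have hie : B.inv e = e := B.mul_idem_inv he
  have hsqe : ∀ t, B.mul e (B.mul e t) = B.mul e t := fun t => by
    rw [← B.mul_assoc, he]
  have hcomm : B.mul e (B.mul (B.inv a) a) = B.mul (B.mul (B.inv a) a) e :=
    B.mul_idem_comm he (gen_idem_ivop B.mul B.inv B.mul_assoc B.inv_reg a)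
  have h := B.clifford (B.mul a e)
  rw [B.inv_mul, hie] at h
  -- h : (a∘e)∘(e∘a⁻) = (e∘a⁻)∘(a∘e)
  calc B.mul (B.mul a e) (B.inv a)
      = B.mul a (B.mul e (B.mul e (B.inv a))) := by rw [hsqe, ← B.mul_assoc]
    _ = B.mul (B.mul a e) (B.mul e (B.inv a)) := by simp only [B.mul_assoc]
    _ = B.mul (B.mul e (B.inv a)) (B.mul a e) := h
    _ = B.mul e (B.mul (B.mul (B.inv a) a) e) := by simp only [B.mul_assoc]
    _ = B.mul e (B.mul e (B.mul (B.inv a) a)) := by rw [← hcomm]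
    _ = B.mul e (B.mul (B.inv a) a) := hsqe _
end DualWeakBrace

namespace DualWeakBrace
variable {S : Type*} (B : DualWeakBrace S)

/-- `∘`-idempotents are central (Clifford). -/
theorem central {e : S} (he : B.mul e e = e) (a : S) :
    B.mul e a = B.mul a e := by
  have hidem : B.mul (B.mul (B.inv a) a) (B.mul (B.inv a) a) = B.mul (B.inv a) a :=
    gen_idem_ivop B.mul B.inv B.mul_assoc B.inv_reg a
  have hcomm : B.mul e (B.mul (B.inv a) a) = B.mul (B.mul (B.inv a) a) e :=
    B.mul_idem_comm he hidem
  have h1 : B.mul e a = B.mul (B.mul (B.mul (B.inv a) a) e) a := by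
    calc B.mul e a
        = B.mul e (B.mul (B.mul a (B.inv a)) a) := by rw [B.mul_reg]
      _ = B.mul (B.mul e (B.mul a (B.inv a))) a := by simp only [B.mul_assoc]
      _ = B.mul (B.mul (B.mul a (B.inv a)) e) a := by
          rw [B.mul_idem_comm he (gen_idem_opiv B.mul B.inv B.mul_assoc B.mul_reg a)]
      _ = B.mul (B.mul (B.mul (B.inv a) a) e) a := by rw [← B.clifford]
  have h2 : B.mul a e = B.mul (B.mul (B.mul (B.inv a) a) e) a := by
    calc B.mul a e
        = B.mul (B.mul a (B.mul (B.inv a) a)) e := by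
          rw [← B.mul_assoc, B.mul_reg]
      _ = B.mul a (B.mul (B.mul (B.inv a) a) e) := by simp only [B.mul_assoc]
      _ = B.mul a (B.mul e (B.mul (B.inv a) a)) := by rw [hcomm]
      _ = B.mul (B.mul (B.mul a e) (B.inv a)) a := by simp only [B.mul_assoc]
      _ = B.mul (B.mul e (B.mul (B.inv a) a)) a := by rw [B.star he]
      _ = B.mul (B.mul (B.mul (B.inv a) a) e) a := by rw [hcomm]
  rw [h1, h2]
end DualWeakBrace

namespace DualWeakBrace
variable {S : Type*} (B : DualWeakBrace S)

theorem weak' (a : S) : B.mul (B.inv a) a = B.add (B.neg a) a := by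
  rw [← B.clifford, B.weak]

theorem mu_mul (a : S) : B.mul a (B.add (B.neg a) a) = a := by
  rw [← B.weak, B.clifford, ← B.mul_assoc, B.mul_reg]

theorem mul_mu (a : S) : B.mul (B.add (B.neg a) a) a = a := by
  rw [← B.weak, B.mul_reg]

theorem mu_idem_mul (a : S) :
    B.mul (B.add (B.neg a) a) (B.add (B.neg a) a) = B.add (B.neg a) a := by
  rw [← B.weak]
  exact gen_idem_opiv B.mul B.inv B.mul_assoc B.mul_reg a

theorem mul_idem_add_idem {e : S} (he : B.mul e e = e) : B.add e e = e := by
  have hw := B.weak e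
  rw [B.mul_idem_inv he, he] at hw
  have h2 := gen_idem_ivop B.add B.neg B.add_assoc B.neg_reg e
  rw [← hw] at h2
  exact h2

theorem mul_idem_neg {e : S} (he : B.mul e e = e) : B.neg e = e :=
  B.add_idem_neg (B.mul_idem_add_idem he)

theorem lam_hom (a x y : S) :
    B.add (B.neg a) (B.mul a (B.add x y)) =
      B.add (B.add (B.neg a) (B.mul a x)) (B.add (B.neg a) (B.mul a y)) := by
  rw [B.dist]; simp only [B.add_assoc]

theorem lam_neg (a b : S) :
    B.add (B.neg a) (B.mul a (B.neg b)) = B.add (B.neg (B.mul a b)) a := by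
  have h := B.add_hom_neg (fun x => B.add (B.neg a) (B.mul a x))
    (fun x y => B.lam_hom a x y) b
  rw [B.neg_add, B.neg_neg] at h
  exact h

theorem idem_abs₂ {ε ρ : S} (hε : B.mul ε ε = ε) (hρ : B.mul ρ ρ = ρ)
    (h : B.mul ε ρ = ρ) : B.add ρ ε = ρ := by
  have hεa := B.mul_idem_add_idem hε
  have hρa := B.mul_idem_add_idem hρ
  have hd := B.dist ε ρ ρ
  rw [hρa, h, B.mul_idem_neg hε] at hd
  -- hd : ρ = (ρ ⊞ ε) ⊞ ρ
  have key : ρ = B.add ρ ε := by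
    calc ρ = B.add (B.add ρ ε) ρ := hd
      _ = B.add ρ (B.add ε ρ) := B.add_assoc ρ ε ρ
      _ = B.add ρ (B.add ρ ε) := by rw [B.add_idem_comm hεa hρa]
      _ = B.add (B.add ρ ρ) ε := by simp only [B.add_assoc]
      _ = B.add ρ ε := by rw [hρa]
  exact key.symm

theorem idem_abs₁ {ε ρ : S} (hε : B.mul ε ε = ε) (hρ : B.mul ρ ρ = ρ)
    (h : B.mul ε ρ = ρ) : B.add ε ρ = ρ := by
  rw [B.add_idem_comm (B.mul_idem_add_idem hε) (B.mul_idem_add_idem hρ)]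
  exact B.idem_abs₂ hε hρ h
end DualWeakBrace

namespace DualWeakBrace
variable {S : Type*} (B : DualWeakBrace S)

theorem delta_idem_mul (a : S) :
    B.mul (B.add a (B.neg a)) (B.add a (B.neg a)) = B.add a (B.neg a) := by
  have h := B.mu_idem_mul (B.neg a); rwa [B.neg_neg] at h

theorem weak_delta (a : S) :
    B.mul (B.neg a) (B.inv (B.neg a)) = B.add a (B.neg a) := by
  rw [B.weak, B.neg_neg]

/-- (VI): `a⁻ ∘ (a - a) = (-a + a) + a⁻`. -/
theorem lemVI (a : S) :
    B.mul (B.inv a) (B.add a (B.neg a)) =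
      B.add (B.add (B.neg a) a) (B.inv a) := by
  calc B.mul (B.inv a) (B.add a (B.neg a))
      = B.add (B.add (B.mul (B.inv a) a) (B.neg (B.inv a)))
          (B.mul (B.inv a) (B.neg a)) := B.dist _ a (B.neg a)
    _ = B.add (B.mul (B.inv a) a)
          (B.add (B.neg (B.inv a)) (B.mul (B.inv a) (B.neg a))) := B.add_assoc _ _ _
    _ = B.add (B.mul (B.inv a) a)
          (B.add (B.neg (B.mul (B.inv a) a)) (B.inv a)) := by rw [B.lam_neg]
    _ = B.add (B.add (B.neg a) a)
          (B.add (B.neg (B.add (B.neg a) a)) (B.inv a)) := by rw [B.weak']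
    _ = B.add (B.add (B.neg a) a)
          (B.add (B.add (B.neg a) a) (B.inv a)) := by
        rw [B.mul_idem_neg (B.mu_idem_mul a)]
    _ = B.add (B.add (B.add (B.neg a) a) (B.add (B.neg a) a)) (B.inv a) := by
        simp only [B.add_assoc]
    _ = B.add (B.add (B.neg a) a) (B.inv a) := by
        rw [B.mul_idem_add_idem (B.mu_idem_mul a)]

/-- (VII): `(-a+a) ∘ (a-a) = (a-a) + (-a+a)`. -/
theorem lemVII (a : S) :
    B.mul (B.add (B.neg a) a) (B.add a (B.neg a)) =
      B.add (B.add a (B.neg a)) (B.add (B.neg a) a) := by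
  calc B.mul (B.add (B.neg a) a) (B.add a (B.neg a))
      = B.mul (B.mul a (B.inv a)) (B.add a (B.neg a)) := by rw [B.weak]
    _ = B.mul a (B.mul (B.inv a) (B.add a (B.neg a))) := B.mul_assoc _ _ _
    _ = B.mul a (B.add (B.add (B.neg a) a) (B.inv a)) := by rw [B.lemVI]
    _ = B.add (B.add (B.mul a (B.add (B.neg a) a)) (B.neg a))
          (B.mul a (B.inv a)) := B.dist _ _ _
    _ = B.add (B.add a (B.neg a)) (B.add (B.neg a) a) := by rw [B.mu_mul, B.weak]

/-- `(-a+a) + (-a) = (-a) + (-a+a)`. -/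
theorem neg_comm_mu (a : S) :
    B.add (B.add (B.neg a) a) (B.neg a) = B.add (B.neg a) (B.add (B.neg a) a) := by
  have hmuI := B.mu_idem_mul a
  have hmuA := B.mul_idem_add_idem hmuI
  have hmuN := B.mul_idem_neg hmuI
  have hdelI := B.delta_idem_mul a
  have hdelA := B.mul_idem_add_idem hdelI
  -- (i) : (u + μ) + a = μ
  have hd := B.dist (B.add (B.neg a) a) (B.neg a) a
  rw [hmuI, B.mul_mu, hmuN] at hd
  have hi : B.add (B.add (B.mul (B.add (B.neg a) a) (B.neg a))
      (B.add (B.neg a) a)) a = B.add (B.neg a) a := hd.symm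
  -- support of u
  have hsupp : B.mul (B.mul (B.add (B.neg a) a) (B.neg a))
      (B.inv (B.mul (B.add (B.neg a) a) (B.neg a)))
      = B.add (B.add a (B.neg a)) (B.add (B.neg a) a) := by
    rw [B.inv_mul, B.mul_idem_inv hmuI]
    rw [B.mul_assoc]
    rw [← B.mul_assoc (B.neg a) (B.inv (B.neg a)) (B.add (B.neg a) a)]
    rw [B.weak_delta]
    rw [B.mul_idem_comm hdelI hmuI]
    rw [← B.mul_assoc, hmuI, B.lemVII]
  -- (ii) : u + (δ + μ) = u
  have hr := B.add_reg (B.mul (B.add (B.neg a) a) (B.neg a))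
  rw [B.add_assoc] at hr
  rw [← B.weak (B.mul (B.add (B.neg a) a) (B.neg a))] at hr
  rw [hsupp] at hr
  -- (iii) : u = μ + (-a)
  have hiii : B.mul (B.add (B.neg a) a) (B.neg a)
      = B.add (B.add (B.neg a) a) (B.neg a) := by
    have h := congrArg (fun t => B.add t (B.neg a)) hi
    rw [B.add_assoc (B.add (B.mul (B.add (B.neg a) a) (B.neg a))
      (B.add (B.neg a) a)) a (B.neg a)] at h
    rw [B.add_assoc (B.mul (B.add (B.neg a) a) (B.neg a))
      (B.add (B.neg a) a) (B.add a (B.neg a))] at h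
    rw [B.add_idem_comm hmuA hdelA] at h
    rw [hr] at h
    exact h
  -- (iv) : u = -a + μ  via λ_μ
  have hiv : B.mul (B.add (B.neg a) a) (B.neg a)
      = B.add (B.neg a) (B.add (B.neg a) a) := by
    have h := B.add_hom_neg
      (fun x => B.add (B.neg (B.add (B.neg a) a)) (B.mul (B.add (B.neg a) a) x))
      (fun x y => B.lam_hom (B.add (B.neg a) a) x y) a
    rw [B.mul_mu, hmuN, B.neg_add, hmuN] at h
    -- h : μ + u = -a + μ
    rw [hiii] at h
    rw [← B.add_assoc, hmuA] at h
    exact hiii.trans h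
  rw [← hiii, hiv]

/-- `(-a+a) + a = a`. -/
theorem mu_absorb (a : S) : B.add (B.add (B.neg a) a) a = a := by
  have step1 : ∀ b : S, B.add b (B.add b (B.neg b)) = b := by
    intro b
    have h := B.neg_comm_mu (B.neg b)
    rw [B.neg_neg] at h
    rw [B.add_reg] at h
    exact h.symm
  have step2 : B.add (B.neg a) (B.add (B.neg a) a) = B.neg a := by
    have h := step1 (B.neg a)
    rwa [B.neg_neg] at h
  have h := congrArg B.neg step2
  rwa [B.neg_add, B.mul_idem_neg (B.mu_idem_mul a), B.neg_neg] at h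

/-- Absorption: if `ε` is a `∘`-idempotent with `ε∘x = x` then `ε + x = x`. -/
theorem abs {ε x : S} (hε : B.mul ε ε = ε) (hx : B.mul ε x = x) :
    B.add ε x = x := by
  have h1 : B.mul ε (B.add (B.neg x) x) = B.add (B.neg x) x := by
    rw [← B.weak, ← B.mul_assoc, hx]
  calc B.add ε x
      = B.add ε (B.add (B.add (B.neg x) x) x) := by rw [B.mu_absorb]
    _ = B.add (B.add ε (B.add (B.neg x) x)) x :=
        (B.add_assoc ε (B.add (B.neg x) x) x).symm
    _ = B.add (B.add (B.neg x) x) x := by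
        rw [B.idem_abs₁ hε (B.mu_idem_mul x) h1]
    _ = x := B.mu_absorb x

end DualWeakBrace

/-- `D_r(S)` is a full inverse subsemigroup of the Clifford semigroup `(S,∘)`:
it contains all idempotents, is closed under `∘` and under `∘`-inverses, and
contains the center of `(S,∘)`. -/
theorem statement10 {S : Type*} (B : DualWeakBrace S) :
    (∀ e : S, B.mul e e = e → e ∈ B.Dr) ∧
      (∀ z w : S, z ∈ B.Dr → w ∈ B.Dr → B.mul z w ∈ B.Dr) ∧
      (∀ z : S, z ∈ B.Dr → B.inv z ∈ B.Dr) ∧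
      (∀ z : S, (∀ a : S, B.mul z a = B.mul a z) → z ∈ B.Dr) := by
  refine ⟨?_, ?_, ?_, ?_⟩
  · -- idempotents
    intro e he a b
    rw [← B.central he (B.add a b), B.dist, B.central he a, B.central he b,
      B.mul_idem_neg he]
  · -- products
    intro z w hz hw a b
    have hezw : B.mul (B.add (B.neg w) w) (B.mul z w) = B.mul z w := by
      rw [← B.mul_assoc, B.central (B.mu_idem_mul w) z, B.mul_assoc, B.mul_mu]
    have hmuzw : B.mul (B.add (B.neg w) w)
        (B.add (B.neg (B.mul z w)) (B.mul z w))
        = B.add (B.neg (B.mul z w)) (B.mul z w) := by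
      rw [← B.weak (B.mul z w), ← B.mul_assoc, hezw]
    have hab : B.add (B.add (B.neg w) w) (B.neg (B.mul z w))
        = B.neg (B.mul z w) := by
      calc B.add (B.add (B.neg w) w) (B.neg (B.mul z w))
          = B.add (B.add (B.neg w) w)
              (B.add (B.add (B.neg (B.mul z w)) (B.neg (B.neg (B.mul z w))))
                (B.neg (B.mul z w))) := by rw [B.add_reg]
        _ = B.add (B.add (B.neg w) w)
              (B.add (B.add (B.neg (B.mul z w)) (B.mul z w))
                (B.neg (B.mul z w))) := by rw [B.neg_neg]
        _ = B.add (B.add (B.add (B.neg w) w)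
              (B.add (B.neg (B.mul z w)) (B.mul z w))) (B.neg (B.mul z w)) :=
            (B.add_assoc _ _ _).symm
        _ = B.add (B.add (B.neg (B.mul z w)) (B.mul z w)) (B.neg (B.mul z w)) := by
            rw [B.idem_abs₁ (B.mu_idem_mul w) (B.mu_idem_mul (B.mul z w)) hmuzw]
        _ = B.neg (B.mul z w) := B.neg_reg (B.mul z w)
    have hhom : ∀ x y : S,
        (fun x => B.add (B.mul x w) (B.neg w)) (B.add x y)
          = B.add ((fun x => B.add (B.mul x w) (B.neg w)) x)
              ((fun x => B.add (B.mul x w) (B.neg w)) y) := by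
      intro x y; simp only; rw [hw x y]; simp only [B.add_assoc]
    have hneg := B.add_hom_neg (fun x => B.add (B.mul x w) (B.neg w)) hhom z
    rw [B.neg_add, B.neg_neg] at hneg
    -- hneg : (-z)∘w - w = w - z∘w
    have hnegc : ∀ t, B.add (B.mul (B.neg z) w) (B.add (B.neg w) t)
        = B.add w (B.add (B.neg (B.mul z w)) t) := by
      intro t
      have h := congrArg (fun s => B.add s t) hneg
      simp only [B.add_assoc] at h
      exact h
    have habc : ∀ t, B.add (B.add (B.neg w) w) (B.add (B.neg (B.mul z w)) t)
        = B.add (B.neg (B.mul z w)) t := by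
      intro t
      have h := congrArg (fun s => B.add s t) hab
      simp only [B.add_assoc] at h
      rw [← B.add_assoc] at h
      exact h
    calc B.mul (B.add a b) (B.mul z w)
        = B.mul (B.mul (B.add a b) z) w := (B.mul_assoc _ _ _).symm
      _ = B.mul (B.add (B.add (B.mul a z) (B.neg z)) (B.mul b z)) w := by
          rw [hz]
      _ = B.add (B.add (B.mul (B.add (B.mul a z) (B.neg z)) w) (B.neg w))
            (B.mul (B.mul b z) w) := hw _ _
      _ = B.add (B.add (B.add (B.add (B.mul (B.mul a z) w) (B.neg w))
            (B.mul (B.neg z) w)) (B.neg w)) (B.mul (B.mul b z) w) := by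
          rw [hw (B.mul a z) (B.neg z)]
      _ = B.add (B.add (B.mul a (B.mul z w)) (B.neg (B.mul z w)))
            (B.mul b (B.mul z w)) := by
          simp only [B.add_assoc, B.mul_assoc]
          rw [hnegc]
          rw [← B.add_assoc (B.neg w) w
            (B.add (B.neg (B.mul z w)) (B.mul b (B.mul z w)))]
          rw [habc (B.mul b (B.mul z w))]
  · -- inverses
    intro z hz a b
    have hεI : B.mul (B.mul z (B.inv z)) (B.mul z (B.inv z)) = B.mul z (B.inv z) :=
      gen_idem_opiv B.mul B.inv B.mul_assoc B.mul_reg z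
    have hεN : B.neg (B.mul z (B.inv z)) = B.mul z (B.inv z) := B.mul_idem_neg hεI
    have hεA : B.add (B.mul z (B.inv z)) (B.mul z (B.inv z)) = B.mul z (B.inv z) :=
      B.mul_idem_add_idem hεI
    have hzinvε : B.mul (B.inv z) (B.mul z (B.inv z)) = B.inv z := by
      rw [← B.mul_assoc]; exact B.inv_reg z
    have hc : B.mul (B.inv z) z = B.mul z (B.inv z) := (B.clifford z).symm
    have hεmulx : ∀ x, B.mul (B.mul z (B.inv z)) (B.mul x (B.inv z))
        = B.mul x (B.inv z) := by
      intro x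
      rw [B.central hεI, B.mul_assoc, hzinvε]
    have hεzinv : B.mul (B.mul z (B.inv z)) (B.inv z) = B.inv z := by
      rw [B.central hεI (B.inv z)]; exact hzinvε
    -- the homomorphism x ↦ x∘z - z
    have hhom : ∀ x y : S,
        (fun x => B.add (B.mul x z) (B.neg z)) (B.add x y)
          = B.add ((fun x => B.add (B.mul x z) (B.neg z)) x)
              ((fun x => B.add (B.mul x z) (B.neg z)) y) := by
      intro x y; simp only; rw [hz x y]; simp only [B.add_assoc]
    have hneg2 := B.add_hom_neg (fun x => B.add (B.mul x z) (B.neg z)) hhom (B.inv z)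
    rw [hc, B.neg_add, B.neg_neg, hεN] at hneg2
    -- hneg2 : (-z⁻)∘z - z = z + ε
    have hneg2c : ∀ t, B.add (B.mul (B.neg (B.inv z)) z) (B.add (B.neg z) t)
        = B.add z (B.add (B.mul z (B.inv z)) t) := by
      intro t; have h := congrArg (fun s => B.add s t) hneg2
      simp only [B.add_assoc] at h; exact h
    -- T∘z = Q
    have hTz : B.mul (B.mul (B.add a b) (B.inv z)) z
        = B.add (B.add (B.mul a (B.mul z (B.inv z))) (B.mul z (B.inv z)))
            (B.mul b (B.mul z (B.inv z))) := by
      calc B.mul (B.mul (B.add a b) (B.inv z)) z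
          = B.mul (B.add a b) (B.mul (B.inv z) z) := B.mul_assoc _ _ _
        _ = B.mul (B.add a b) (B.mul z (B.inv z)) := by rw [hc]
        _ = B.mul (B.mul z (B.inv z)) (B.add a b) :=
            (B.central hεI (B.add a b)).symm
        _ = B.add (B.add (B.mul (B.mul z (B.inv z)) a)
              (B.neg (B.mul z (B.inv z)))) (B.mul (B.mul z (B.inv z)) b) :=
            B.dist _ _ _
        _ = B.add (B.add (B.mul a (B.mul z (B.inv z))) (B.mul z (B.inv z)))
              (B.mul b (B.mul z (B.inv z))) := by
            rw [hεN, B.central hεI a, B.central hεI b]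
    -- R∘z = Q
    have hRz : B.mul (B.add (B.add (B.mul a (B.inv z)) (B.neg (B.inv z)))
        (B.mul b (B.inv z))) z
        = B.add (B.add (B.mul a (B.mul z (B.inv z))) (B.mul z (B.inv z)))
            (B.mul b (B.mul z (B.inv z))) := by
      calc B.mul (B.add (B.add (B.mul a (B.inv z)) (B.neg (B.inv z)))
          (B.mul b (B.inv z))) z
          = B.add (B.add (B.mul (B.add (B.mul a (B.inv z)) (B.neg (B.inv z))) z)
              (B.neg z)) (B.mul (B.mul b (B.inv z)) z) := hz _ _
        _ = B.add (B.add (B.add (B.add (B.mul (B.mul a (B.inv z)) z) (B.neg z))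
              (B.mul (B.neg (B.inv z)) z)) (B.neg z))
              (B.mul (B.mul b (B.inv z)) z) := by
            rw [hz (B.mul a (B.inv z)) (B.neg (B.inv z))]
        _ = B.add (B.add (B.mul a (B.mul z (B.inv z))) (B.mul z (B.inv z)))
              (B.mul b (B.mul z (B.inv z))) := by
            simp only [B.add_assoc, B.mul_assoc]
            rw [hc, hneg2c]
            rw [← B.add_assoc (B.neg z) z
              (B.add (B.mul z (B.inv z)) (B.mul b (B.mul z (B.inv z))))]
            rw [← B.weak z]
            rw [← B.add_assoc (B.mul z (B.inv z)) (B.mul z (B.inv z))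
              (B.mul b (B.mul z (B.inv z))), hεA]
    -- λ_ε identity : ε + ε∘(-z⁻) = -z⁻ + ε
    have hx := B.add_hom_neg
      (fun x => B.add (B.neg (B.mul z (B.inv z))) (B.mul (B.mul z (B.inv z)) x))
      (fun x y => B.lam_hom (B.mul z (B.inv z)) x y) (B.inv z)
    rw [hεN, hεzinv, B.neg_add, hεN] at hx
    have hxc : ∀ t, B.add (B.mul z (B.inv z))
        (B.add (B.mul (B.mul z (B.inv z)) (B.neg (B.inv z))) t)
        = B.add (B.neg (B.inv z)) (B.add (B.mul z (B.inv z)) t) := by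
      intro t; have h := congrArg (fun s => B.add s t) hx
      simp only [B.add_assoc] at h; exact h
    have habsb : B.add (B.mul z (B.inv z)) (B.mul b (B.inv z))
        = B.mul b (B.inv z) := B.abs hεI (hεmulx b)
    -- R∘ε = R
    have hRε : B.mul (B.add (B.add (B.mul a (B.inv z)) (B.neg (B.inv z)))
        (B.mul b (B.inv z))) (B.mul z (B.inv z))
        = B.add (B.add (B.mul a (B.inv z)) (B.neg (B.inv z)))
            (B.mul b (B.inv z)) := by
      calc B.mul (B.add (B.add (B.mul a (B.inv z)) (B.neg (B.inv z)))
          (B.mul b (B.inv z))) (B.mul z (B.inv z))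
          = B.mul (B.mul z (B.inv z)) (B.add (B.add (B.mul a (B.inv z))
              (B.neg (B.inv z))) (B.mul b (B.inv z))) :=
            (B.central hεI _).symm
        _ = B.add (B.add (B.mul (B.mul z (B.inv z)) (B.add (B.mul a (B.inv z))
              (B.neg (B.inv z)))) (B.neg (B.mul z (B.inv z))))
              (B.mul (B.mul z (B.inv z)) (B.mul b (B.inv z))) := B.dist _ _ _
        _ = B.add (B.add (B.add (B.add (B.mul (B.mul z (B.inv z))
              (B.mul a (B.inv z))) (B.neg (B.mul z (B.inv z))))
              (B.mul (B.mul z (B.inv z)) (B.neg (B.inv z))))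
              (B.neg (B.mul z (B.inv z))))
              (B.mul (B.mul z (B.inv z)) (B.mul b (B.inv z))) := by
            rw [B.dist (B.mul z (B.inv z)) (B.mul a (B.inv z)) (B.neg (B.inv z))]
        _ = B.add (B.add (B.mul a (B.inv z)) (B.neg (B.inv z)))
              (B.mul b (B.inv z)) := by
            rw [hεN, hεmulx a, hεmulx b]
            simp only [B.add_assoc]
            rw [hxc]
            rw [← B.add_assoc (B.mul z (B.inv z)) (B.mul z (B.inv z))
              (B.mul b (B.inv z)), hεA, habsb]
    -- assemble
    have hTfull : B.mul (B.add a b) (B.inv z)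
        = B.mul (B.add (B.add (B.mul a (B.mul z (B.inv z))) (B.mul z (B.inv z)))
            (B.mul b (B.mul z (B.inv z)))) (B.inv z) := by
      conv_lhs => rw [← hzinvε]
      rw [← B.mul_assoc (B.add a b) (B.inv z) (B.mul z (B.inv z))]
      rw [← B.mul_assoc (B.mul (B.add a b) (B.inv z)) z (B.inv z)]
      rw [hTz]
    have hRfull : B.add (B.add (B.mul a (B.inv z)) (B.neg (B.inv z)))
        (B.mul b (B.inv z))
        = B.mul (B.add (B.add (B.mul a (B.mul z (B.inv z))) (B.mul z (B.inv z)))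
            (B.mul b (B.mul z (B.inv z)))) (B.inv z) := by
      conv_lhs => rw [← hRε]
      rw [← B.mul_assoc _ z (B.inv z)]
      rw [hRz]
    exact hTfull.trans hRfull.symm
  · -- center
    intro z hz a b
    rw [← hz (B.add a b), B.dist, hz a, hz b]
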